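/- In the atomic model, consider a winning pool S consisting of one large player of stake a and k small players of stake 1 each, with threshold h, a < h. If k < h and k + a ≥ h, the Shapley value of the large player is (k − h + a + 1)/(k + 1) and each small player receives (h − a)/(k(k+1)); if k ≥ h, the large player gets a/(k+1) and each small player gets (k + 1 − a)/(k(k+1)). In both cases the payoffs sum to 1. -/

import Mathlib

open Finset

/-- Threshold reward function: a coalition gets reward 1 iff its total stake reaches `h`. -/
noncomputable def poolReward {n : ℕ} (w : Fin n → ℝ) (h : ℝ) (T : Finset (Fin n)) : ℝ :=
  if h ≤ ∑ j ∈ T, w j then 1 else 0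

/-- The (atomic) Shapley value of player `i` in the pool of all `n` players. -/
noncomputable def shapley {n : ℕ} (w : Fin n → ℝ) (h : ℝ) (i : Fin n) : ℝ :=
  ∑ T ∈ ((univ : Finset (Fin n)).erase i).powerset,
    ((Nat.factorial T.card * Nat.factorial (n - T.card - 1) : ℕ) : ℝ) / (Nat.factorial n : ℝ) *
      (poolReward w h (insert i T) - poolReward w h T)

private lemma stake_eq {k : ℕ} (a : ℕ) (T : Finset (Fin (k+1))) (hT : (0 : Fin (k+1)) ∉ T) :
    ∑ j ∈ T, (fun i : Fin (k+1) => if i = 0 then (a : ℝ) else 1) j = T.card := by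
  have hone : ∀ j ∈ T, (if j = (0 : Fin (k+1)) then (a : ℝ) else 1) = 1 := by
    intro j hj
    rw [if_neg]
    rintro rfl
    exact hT hj
  rw [Finset.sum_congr rfl hone]
  simp

private lemma ind_diff (h m n : ℕ) (hmn : m ≤ n) :
    (if (h : ℝ) ≤ (n : ℕ) then (1:ℝ) else 0) - (if (h : ℝ) ≤ (m : ℕ) then 1 else 0)
      = if h ≤ n ∧ m < h then 1 else 0 := by
  simp only [Nat.cast_le]
  by_cases p : h ≤ m
  · rw [if_pos (le_trans p hmn), if_pos p, if_neg (by omega)]; ring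
  · rw [if_neg p]
    by_cases q : h ≤ n
    · rw [if_pos q, if_pos ⟨q, by omega⟩]; ring
    · rw [if_neg q, if_neg (by omega)]; ring

private lemma shapley_large_sum (h a k : ℕ) :
    shapley (fun i : Fin (k+1) => if i = 0 then (a : ℝ) else 1) h 0
      = ∑ j ∈ range (k+1), (if h ≤ j + a ∧ j < h then (1 : ℝ)/(k+1) else 0) := by
  have hE : #((univ : Finset (Fin (k+1))).erase 0) = k := by simp
  rw [shapley, Finset.sum_powerset, hE]
  refine Finset.sum_congr rfl fun j hj => ?_
  have hjk : j ≤ k := Nat.lt_succ_iff.mp (mem_range.mp hj)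
  have hstep : ∀ T ∈ powersetCard j ((univ : Finset (Fin (k+1))).erase 0),
      ((Nat.factorial T.card * Nat.factorial (k + 1 - T.card - 1) : ℕ) : ℝ) /
          (Nat.factorial (k+1) : ℝ) *
        (poolReward (fun i : Fin (k+1) => if i = 0 then (a : ℝ) else 1) h (insert 0 T) -
          poolReward (fun i : Fin (k+1) => if i = 0 then (a : ℝ) else 1) h T)
      = ((Nat.factorial j * Nat.factorial (k - j) : ℕ) : ℝ) / (Nat.factorial (k+1) : ℝ) *
          (if h ≤ j + a ∧ j < h then 1 else 0) := by
    intro T hT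
    obtain ⟨hTs, hTc⟩ := mem_powersetCard.mp hT
    have h0T : (0 : Fin (k+1)) ∉ T := fun hx => (notMem_erase _ _) (hTs hx)
    have hsum : ∑ x ∈ T, (fun i : Fin (k+1) => if i = 0 then (a : ℝ) else 1) x = j := by
      rw [stake_eq a T h0T, hTc]
    have hsum' : ∑ x ∈ insert (0 : Fin (k+1)) T,
        (fun i : Fin (k+1) => if i = 0 then (a : ℝ) else 1) x = ((j + a : ℕ) : ℝ) := by
      rw [Finset.sum_insert h0T, hsum]; push_cast; simp [add_comm]
    rw [hTc, show k + 1 - j - 1 = k - j from by omega, poolReward, poolReward, hsum, hsum']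
    congr 1
    rw [show (j : ℝ) = ((j : ℕ) : ℝ) from rfl, ind_diff h j (j + a) (by omega)]
  rw [Finset.sum_congr rfl hstep, Finset.sum_const, card_powersetCard, hE, nsmul_eq_mul]
  by_cases hc : h ≤ j + a ∧ j < h
  · rw [if_pos hc, if_pos hc, mul_one]
    have hfact := Nat.choose_mul_factorial_mul_factorial hjk
    have key : ((k.choose j : ℕ) : ℝ) * ((Nat.factorial j * Nat.factorial (k - j) : ℕ) : ℝ)
        = (Nat.factorial k : ℝ) := by
      push_cast
      rw [← mul_assoc]
      exact_mod_cast hfact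
    have h1 : ((Nat.factorial (k+1) : ℕ) : ℝ) = ((k : ℝ) + 1) * (Nat.factorial k : ℝ) := by
      rw [Nat.factorial_succ]; push_cast; ring
    rw [h1, mul_div_assoc', div_eq_div_iff (by positivity) (by positivity), key]
    ring
  · rw [if_neg hc, if_neg hc]
    simp

private lemma shapley_large_case1 (h a k : ℕ) (ha : 1 ≤ a) (hah : a < h)
    (hkh : k < h) (hka : h ≤ k + a) :
    shapley (fun i : Fin (k+1) => if i = 0 then (a : ℝ) else 1) h 0
      = ((k : ℝ) - h + a + 1) / (k + 1) := by
  rw [shapley_large_sum]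
  have hcond : ∀ j ∈ range (k+1),
      (if h ≤ j + a ∧ j < h then (1 : ℝ)/(k+1) else 0)
        = if h - a ≤ j then (1 : ℝ)/(k+1) else 0 := by
    intro j hj
    have hjk : j ≤ k := Nat.lt_succ_iff.mp (mem_range.mp hj)
    exact if_congr (by omega) rfl rfl
  rw [Finset.sum_congr rfl hcond, ← Finset.sum_filter,
    show (range (k+1)).filter (fun j => h - a ≤ j) = Ico (h - a) (k+1) from by
      ext t; simp [Finset.mem_filter, Finset.mem_Ico]; omega,
    Finset.sum_const, Nat.card_Ico, nsmul_eq_mul]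
  rw [Nat.cast_sub (by omega), Nat.cast_sub (by omega)]
  push_cast
  field_simp
  ring

private lemma shapley_large_case2 (h a k : ℕ) (ha : 1 ≤ a) (hah : a < h) (hhk : h ≤ k) :
    shapley (fun i : Fin (k+1) => if i = 0 then (a : ℝ) else 1) h 0
      = (a : ℝ) / (k + 1) := by
  rw [shapley_large_sum]
  have hcond : ∀ j ∈ range (k+1),
      (if h ≤ j + a ∧ j < h then (1 : ℝ)/(k+1) else 0)
        = if j ∈ Ico (h - a) h then (1 : ℝ)/(k+1) else 0 := by
    intro j hj
    exact if_congr (by rw [Finset.mem_Ico]; omega) rfl rfl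
  rw [Finset.sum_congr rfl hcond, ← Finset.sum_filter,
    show (range (k+1)).filter (fun j => j ∈ Ico (h - a) h) = Ico (h - a) h from by
      ext t; simp [Finset.mem_filter, Finset.mem_Ico]; omega,
    Finset.sum_const, Nat.card_Ico, nsmul_eq_mul,
    show h - (h - a) = a from by omega]
  field_simp

private lemma fact_id1 (k j : ℕ) (hk : 0 < k) (hj : j ≤ k - 1) :
    (((k-1).choose j : ℕ) : ℝ) * (((Nat.factorial j * Nat.factorial (k - j) : ℕ)) : ℝ)
      / ((Nat.factorial (k+1) : ℕ) : ℝ) = ((k - j : ℕ) : ℝ) / ((k : ℝ) * ((k : ℝ) + 1)) := by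
  have hnat : (k-1).choose j * (Nat.factorial j * Nat.factorial (k - j)) * (k * (k + 1))
      = (k - j) * Nat.factorial (k+1) := by
    have e1 : Nat.factorial (k - j) = (k - j) * Nat.factorial (k - 1 - j) := by
      rw [show k - j = (k - 1 - j) + 1 from by omega, Nat.factorial_succ]
    have e2 := Nat.choose_mul_factorial_mul_factorial hj
    have e3 : Nat.factorial (k + 1) = (k + 1) * (k * Nat.factorial (k - 1)) := by
      rw [Nat.factorial_succ]
      congr 1
      conv_lhs => rw [show k = (k-1)+1 from by omega, Nat.factorial_succ,
        show k - 1 + 1 = k from by omega]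
    rw [e1, e3]
    calc (k-1).choose j * (Nat.factorial j * ((k - j) * Nat.factorial (k - 1 - j))) * (k * (k+1))
        = ((k-1).choose j * Nat.factorial j * Nat.factorial (k-1-j)) * ((k - j) * (k * (k+1))) := by
          ring
      _ = Nat.factorial (k-1) * ((k - j) * (k * (k+1))) := by rw [e2]
      _ = (k - j) * ((k + 1) * (k * Nat.factorial (k - 1))) := by ring
  rw [div_eq_div_iff (by positivity) (by positivity)]
  exact_mod_cast hnat

private lemma fact_id2 (k j : ℕ) (hk : 0 < k) (hj : j ≤ k - 1) :
    (((k-1).choose j : ℕ) : ℝ) * (((Nat.factorial (j+1) * Nat.factorial (k - j - 1) : ℕ)) : ℝ)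
      / ((Nat.factorial (k+1) : ℕ) : ℝ) = ((j + 1 : ℕ) : ℝ) / ((k : ℝ) * ((k : ℝ) + 1)) := by
  have hnat : (k-1).choose j * (Nat.factorial (j+1) * Nat.factorial (k - j - 1)) * (k * (k + 1))
      = (j + 1) * Nat.factorial (k+1) := by
    have e1 : Nat.factorial (j + 1) = (j + 1) * Nat.factorial j := Nat.factorial_succ j
    have e2 := Nat.choose_mul_factorial_mul_factorial hj
    have e3 : Nat.factorial (k + 1) = (k + 1) * (k * Nat.factorial (k - 1)) := by
      rw [Nat.factorial_succ]
      congr 1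
      conv_lhs => rw [show k = (k-1)+1 from by omega, Nat.factorial_succ,
        show k - 1 + 1 = k from by omega]
    rw [e1, e3, show k - j - 1 = k - 1 - j from by omega]
    calc (k-1).choose j * ((j+1) * Nat.factorial j * Nat.factorial (k - 1 - j)) * (k * (k+1))
        = ((k-1).choose j * Nat.factorial j * Nat.factorial (k-1-j)) * ((j+1) * (k * (k+1))) := by
          ring
      _ = Nat.factorial (k-1) * ((j+1) * (k * (k+1))) := by rw [e2]
      _ = (j + 1) * ((k + 1) * (k * Nat.factorial (k - 1))) := by ring
  rw [div_eq_div_iff (by positivity) (by positivity)]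
  exact_mod_cast hnat

private lemma shapley_small_sum (h a k : ℕ) (hk : 0 < k) (i : Fin (k+1)) (hi : i ≠ 0) :
    shapley (fun j : Fin (k+1) => if j = 0 then (a : ℝ) else 1) h i
      = (∑ j ∈ range k, if j + 1 = h then ((k - j : ℕ) : ℝ) / ((k : ℝ) * ((k : ℝ)+1)) else 0)
        + ∑ j ∈ range k, if j + a + 1 = h then ((j + 1 : ℕ) : ℝ) / ((k : ℝ) * ((k : ℝ)+1)) else 0 := by
  set w : Fin (k+1) → ℝ := fun j => if j = 0 then (a : ℝ) else 1 with hw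
  have h0E : (0 : Fin (k+1)) ∈ (univ : Finset (Fin (k+1))).erase i :=
    mem_erase.mpr ⟨Ne.symm hi, mem_univ _⟩
  set S : Finset (Fin (k+1)) := ((univ : Finset (Fin (k+1))).erase i).erase 0 with hS
  have h0S : (0 : Fin (k+1)) ∉ S := notMem_erase _ _
  have hiS : i ∉ S := fun hx => (notMem_erase i _) (mem_of_mem_erase hx)
  have hScard : #S = k - 1 := by
    rw [hS, card_erase_of_mem h0E, card_erase_of_mem (mem_univ i), card_univ]
    simp
  have hins : (univ : Finset (Fin (k+1))).erase i = insert 0 S := (insert_erase h0E).symm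
  rw [shapley, hins, Finset.sum_powerset_insert h0S]
  congr 1
  -- first sum: subsets not containing the large player
  · rw [Finset.sum_powerset, hScard, show k - 1 + 1 = k from by omega]
    refine Finset.sum_congr rfl fun j hj => ?_
    have hjk : j ≤ k - 1 := Nat.lt_succ_iff.mp (by
      have := mem_range.mp hj; omega)
    have hstep : ∀ T ∈ powersetCard j S,
        ((Nat.factorial T.card * Nat.factorial (k + 1 - T.card - 1) : ℕ) : ℝ) /
            (Nat.factorial (k+1) : ℝ) * (poolReward w h (insert i T) - poolReward w h T)
        = ((Nat.factorial j * Nat.factorial (k - j) : ℕ) : ℝ) / (Nat.factorial (k+1) : ℝ) *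
            (if j + 1 = h then 1 else 0) := by
      intro T hT
      obtain ⟨hTs, hTc⟩ := mem_powersetCard.mp hT
      have h0T : (0 : Fin (k+1)) ∉ T := fun hx => h0S (hTs hx)
      have hiT : i ∉ T := fun hx => hiS (hTs hx)
      have hsum : ∑ x ∈ T, w x = ((j : ℕ) : ℝ) := by rw [hw, stake_eq a T h0T, hTc]
      have hsum' : ∑ x ∈ insert i T, w x = ((j + 1 : ℕ) : ℝ) := by
        rw [Finset.sum_insert hiT, hsum, hw]
        simp [hi]
        push_cast; ring
      rw [hTc, show k + 1 - j - 1 = k - j from by omega, poolReward, poolReward, hsum, hsum']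
      congr 1
      rw [ind_diff h j (j + 1) (by omega)]
      exact if_congr (by omega) rfl rfl
    rw [Finset.sum_congr rfl hstep, Finset.sum_const, card_powersetCard, hScard, nsmul_eq_mul]
    by_cases hc : j + 1 = h
    · rw [if_pos hc, if_pos hc, mul_one, ← mul_div_assoc, fact_id1 k j hk hjk]
    · rw [if_neg hc, if_neg hc]; simp
  -- second sum: subsets containing the large player
  · rw [Finset.sum_powerset, hScard, show k - 1 + 1 = k from by omega]
    refine Finset.sum_congr rfl fun j hj => ?_
    have hjk : j ≤ k - 1 := Nat.lt_succ_iff.mp (by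
      have := mem_range.mp hj; omega)
    have hstep : ∀ T ∈ powersetCard j S,
        ((Nat.factorial (insert (0 : Fin (k+1)) T).card *
            Nat.factorial (k + 1 - (insert (0 : Fin (k+1)) T).card - 1) : ℕ) : ℝ) /
            (Nat.factorial (k+1) : ℝ) *
          (poolReward w h (insert i (insert 0 T)) - poolReward w h (insert 0 T))
        = ((Nat.factorial (j+1) * Nat.factorial (k - j - 1) : ℕ) : ℝ) /
            (Nat.factorial (k+1) : ℝ) * (if j + a + 1 = h then 1 else 0) := by
      intro T hT
      obtain ⟨hTs, hTc⟩ := mem_powersetCard.mp hT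
      have h0T : (0 : Fin (k+1)) ∉ T := fun hx => h0S (hTs hx)
      have hiT : i ∉ T := fun hx => hiS (hTs hx)
      have hi0T : i ∉ insert (0 : Fin (k+1)) T := by
        simp only [mem_insert]
        push_neg
        exact ⟨hi, hiT⟩
      have hcard : (insert (0 : Fin (k+1)) T).card = j + 1 := by
        rw [card_insert_of_notMem h0T, hTc]
      have hsum : ∑ x ∈ insert (0 : Fin (k+1)) T, w x = ((j + a : ℕ) : ℝ) := by
        rw [Finset.sum_insert h0T, hw, stake_eq a T h0T, hTc]
        simp
        push_cast; ring
      have hsum' : ∑ x ∈ insert i (insert (0 : Fin (k+1)) T), w x = ((j + a + 1 : ℕ) : ℝ) := by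
        rw [Finset.sum_insert hi0T, hsum, hw]
        simp [hi]
        push_cast; ring
      rw [hcard, show k + 1 - (j+1) - 1 = k - j - 1 from by omega,
        poolReward, poolReward, hsum, hsum']
      congr 1
      rw [ind_diff h (j + a) (j + a + 1) (by omega)]
      exact if_congr (by omega) rfl rfl
    rw [Finset.sum_congr rfl hstep, Finset.sum_const, card_powersetCard, hScard, nsmul_eq_mul]
    by_cases hc : j + a + 1 = h
    · rw [if_pos hc, if_pos hc, mul_one, ← mul_div_assoc, fact_id2 k j hk hjk]
    · rw [if_neg hc, if_neg hc]; simp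

private lemma shapley_small_case1 (h a k : ℕ) (hk : 0 < k) (ha : 1 ≤ a) (hah : a < h)
    (hkh : k < h) (hka : h ≤ k + a) (i : Fin (k+1)) (hi : i ≠ 0) :
    shapley (fun j : Fin (k+1) => if j = 0 then (a : ℝ) else 1) h i
      = ((h : ℝ) - a) / ((k : ℝ) * ((k : ℝ) + 1)) := by
  rw [shapley_small_sum h a k hk i hi]
  have e1 : ∀ j ∈ range k,
      (if j + 1 = h then ((k - j : ℕ) : ℝ) / ((k : ℝ) * ((k : ℝ)+1)) else 0) = 0 := by
    intro j hj
    have := mem_range.mp hj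
    rw [if_neg (by omega)]
  have e2 : ∀ j ∈ range k,
      (if j + a + 1 = h then ((j + 1 : ℕ) : ℝ) / ((k : ℝ) * ((k : ℝ)+1)) else 0)
        = (if j = h - a - 1 then ((j + 1 : ℕ) : ℝ) / ((k : ℝ) * ((k : ℝ)+1)) else 0) :=
    fun j _ => if_congr (by omega) rfl rfl
  rw [Finset.sum_congr rfl e1, Finset.sum_congr rfl e2, Finset.sum_ite_eq',
    if_pos (mem_range.mpr (by omega))]
  simp only [Finset.sum_const_zero, zero_add]
  rw [show h - a - 1 + 1 = h - a from by omega, Nat.cast_sub (by omega)]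

private lemma shapley_small_case2 (h a k : ℕ) (hk : 0 < k) (ha : 1 ≤ a) (hah : a < h)
    (hhk : h ≤ k) (i : Fin (k+1)) (hi : i ≠ 0) :
    shapley (fun j : Fin (k+1) => if j = 0 then (a : ℝ) else 1) h i
      = ((k : ℝ) + 1 - a) / ((k : ℝ) * ((k : ℝ) + 1)) := by
  rw [shapley_small_sum h a k hk i hi]
  have e1 : ∀ j ∈ range k,
      (if j + 1 = h then ((k - j : ℕ) : ℝ) / ((k : ℝ) * ((k : ℝ)+1)) else 0)
        = (if j = h - 1 then ((k - j : ℕ) : ℝ) / ((k : ℝ) * ((k : ℝ)+1)) else 0) :=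
    fun j _ => if_congr (by omega) rfl rfl
  have e2 : ∀ j ∈ range k,
      (if j + a + 1 = h then ((j + 1 : ℕ) : ℝ) / ((k : ℝ) * ((k : ℝ)+1)) else 0)
        = (if j = h - a - 1 then ((j + 1 : ℕ) : ℝ) / ((k : ℝ) * ((k : ℝ)+1)) else 0) :=
    fun j _ => if_congr (by omega) rfl rfl
  rw [Finset.sum_congr rfl e1, Finset.sum_congr rfl e2, Finset.sum_ite_eq', Finset.sum_ite_eq',
    if_pos (mem_range.mpr (by omega)), if_pos (mem_range.mpr (by omega))]
  rw [show h - a - 1 + 1 = h - a from by omega, Nat.cast_sub (by omega),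
    Nat.cast_sub (by omega), Nat.cast_sub (by omega)]
  push_cast
  rw [← add_div]
  ring_nf

/-- Atomic pool with one large player (stake `a`, `1 < a < h`) and `k` small players of
stake 1: if `k < h` and `k + a ≥ h`, the large player's Shapley value is
`(k - h + a + 1)/(k + 1)` and each small player gets `(h - a)/(k(k+1))`; if `k ≥ h`, the
large player gets `a/(k+1)` and each small player gets `(k + 1 - a)/(k(k+1))`.
In both (winning) cases the payoffs sum to 1. -/
theorem shapley_one_large_atomic
    (h a k : ℕ) (hk : 0 < k) (ha : 1 < a) (hah : a < h) :
    let w : Fin (k + 1) → ℝ := fun i => if i = 0 then (a : ℝ) else 1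
    ((k < h ∧ h ≤ k + a) →
        shapley w h 0 = ((k : ℝ) - h + a + 1) / (k + 1) ∧
        ∀ i : Fin (k + 1), i ≠ 0 → shapley w h i = ((h : ℝ) - a) / (k * (k + 1))) ∧
    (h ≤ k →
        shapley w h 0 = (a : ℝ) / (k + 1) ∧
        ∀ i : Fin (k + 1), i ≠ 0 → shapley w h i = ((k : ℝ) + 1 - a) / (k * (k + 1))) ∧
    (h ≤ k + a → ∑ i, shapley w h i = 1) := by
  intro w
  refine ⟨fun ⟨hkh, hka⟩ => ⟨?_, fun i hi => ?_⟩, fun hhk => ⟨?_, fun i hi => ?_⟩, fun hwin => ?_⟩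
  · exact shapley_large_case1 h a k ha.le hah hkh hka
  · exact shapley_small_case1 h a k hk ha.le hah hkh hka i hi
  · exact shapley_large_case2 h a k ha.le hah hhk
  · exact shapley_small_case2 h a k hk ha.le hah hhk i hi
  · have hk0 : (k : ℝ) ≠ 0 := Nat.cast_ne_zero.mpr (by omega)
    have hk1 : (k : ℝ) + 1 ≠ 0 := by positivity
    rw [Fin.sum_univ_succ]
    rcases Nat.lt_or_ge k h with hkh | hhk
    · rw [shapley_large_case1 h a k ha.le hah hkh hwin,
        Finset.sum_congr rfl (fun x _ =>
          shapley_small_case1 h a k hk ha.le hah hkh hwin x.succ (Fin.succ_ne_zero x)),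
        Finset.sum_const, card_univ, Fintype.card_fin, nsmul_eq_mul]
      field_simp
      ring
    · rw [shapley_large_case2 h a k ha.le hah hhk,
        Finset.sum_congr rfl (fun x _ =>
          shapley_small_case2 h a k hk ha.le hah hhk x.succ (Fin.succ_ne_zero x)),
        Finset.sum_const, card_univ, Fintype.card_fin, nsmul_eq_mul]
      field_simp
      ring
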